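/- Let Ω be a finite nonempty set, ρ a probability distribution on Ω, G a perturbation graph on Ω, and α ∈ [0,1]. Let x : Ω → [0,1] satisfy Σ_{y∈in(z)} ρ(y)·x(y) ≤ α for every z ∈ Ω. Then the joint distribution 𝒫 on Ω × 2^Ω defined by 𝒫(X = y, R = out(y)) = ρ(y)·x(y), 𝒫(X = y, R = ∅) = ρ(y)·(1 − x(y)), and 𝒫 = 0 on all other pairs, is a distortion-free watermarking scheme of ρ with Type I error at most α and with robust Type II error with respect to G equal to 1 − Σ_{y∈Ω} ρ(y)·x(y). -/
import Mathlib


open Finset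

noncomputable section

/-- The robust Type II error of a scheme `P` with respect to a perturbation
relation `E`: the probability that some allowed perturbation of `X`
(an element of `out(X)`) falls outside the rejection region `R`. -/
def robustTypeII {Ω : Type*} [Fintype Ω] [DecidableEq Ω]
    (E : Ω → Ω → Prop) [DecidableRel E] (P : Ω × Finset Ω → ℝ) : ℝ :=
  ∑ p : Ω × Finset Ω, if ¬ (univ.filter (fun w => E p.1 w) ⊆ p.2) then P p else 0

/-- Given a feasible `x : Ω → [0,1]` for the linear program, the scheme
`𝒫(X = y, R = out(y)) = ρ(y)·x(y)`, `𝒫(X = y, R = ∅) = ρ(y)·(1 − x(y))` is a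
distortion-free watermarking scheme of `ρ` with Type I error at most `α` and
robust Type II error `1 − ∑_y ρ(y)·x(y)`. -/
theorem stmt_10 {Ω : Type*} [Fintype Ω] [DecidableEq Ω] [Nonempty Ω]
    (ρ : Ω → ℝ) (hρ0 : ∀ x, 0 ≤ ρ x) (hρ1 : ∑ x, ρ x = 1)
    (E : Ω → Ω → Prop) [DecidableRel E] (hrefl : ∀ u, E u u)
    (α : ℝ) (hα : α ∈ Set.Icc (0 : ℝ) 1)
    (x : Ω → ℝ) (hx01 : ∀ y, x y ∈ Set.Icc (0 : ℝ) 1)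
    (hxfeas : ∀ z : Ω, (∑ y ∈ univ.filter (fun y => E y z), ρ y * x y) ≤ α)
    (P : Ω × Finset Ω → ℝ)
    (hPdef : P = fun p =>
      if p.2 = univ.filter (fun w => E p.1 w) then ρ p.1 * x p.1
      else if p.2 = ∅ then ρ p.1 * (1 - x p.1)
      else 0) :
    (∀ p, 0 ≤ P p) ∧ (∑ p, P p = 1) ∧
    (∀ y : Ω, (∑ R : Finset Ω, P (y, R)) = ρ y) ∧
    (∀ y : Ω, (∑ p : Ω × Finset Ω, if y ∈ p.2 then P p else 0) ≤ α) ∧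
    robustTypeII E P = 1 - ∑ y, ρ y * x y := by
  subst hPdef
  have hA : ∀ z : Ω, (univ.filter (fun w => E z w)) ≠ (∅ : Finset Ω) := by
    intro z h
    have hz : z ∈ univ.filter (fun w => E z w) := by simp [hrefl z]
    rw [h] at hz
    exact absurd hz (Finset.notMem_empty z)
  have hmarg : ∀ y : Ω, (∑ R : Finset Ω,
      (if R = univ.filter (fun w => E y w) then ρ y * x y
       else if R = ∅ then ρ y * (1 - x y) else 0)) = ρ y := by
    intro y
    have hpt : ∀ R : Finset Ω,
        (if R = univ.filter (fun w => E y w) then ρ y * x y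
         else if R = ∅ then ρ y * (1 - x y) else 0)
        = (if R = univ.filter (fun w => E y w) then ρ y * x y else 0)
          + (if R = ∅ then ρ y * (1 - x y) else 0) := by
      intro R
      by_cases h1 : R = univ.filter (fun w => E y w)
      · subst h1; simp [hA y]
      · simp [h1]
    rw [Finset.sum_congr rfl (fun R _ => hpt R), Finset.sum_add_distrib,
      Finset.sum_ite_eq' univ, Finset.sum_ite_eq' univ]
    simp; ring
  refine ⟨?_, ?_, fun y => by simpa using hmarg y, ?_, ?_⟩
  · intro p
    obtain ⟨hx0, hx1⟩ := hx01 p.1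
    have hρ := hρ0 p.1
    dsimp only
    split_ifs
    · exact mul_nonneg hρ hx0
    · exact mul_nonneg hρ (by linarith)
    · exact le_refl 0
  · dsimp only
    rw [Fintype.sum_prod_type]
    rw [Finset.sum_congr rfl (fun y _ => hmarg y)]
    exact hρ1
  · intro y
    dsimp only
    rw [Fintype.sum_prod_type]
    have hterm : ∀ z : Ω, (∑ R : Finset Ω,
        if y ∈ R then
          (if R = univ.filter (fun w => E z w) then ρ z * x z
           else if R = ∅ then ρ z * (1 - x z) else 0) else 0)
        = if E z y then ρ z * x z else 0 := by
      intro z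
      have hpt : ∀ R : Finset Ω,
          (if y ∈ R then
            (if R = univ.filter (fun w => E z w) then ρ z * x z
             else if R = ∅ then ρ z * (1 - x z) else 0) else 0)
          = (if R = univ.filter (fun w => E z w) then
              (if E z y then ρ z * x z else 0) else 0) := by
        intro R
        by_cases h1 : R = univ.filter (fun w => E z w)
        · subst h1; by_cases hy : E z y <;> simp [hy]
        · by_cases h2 : R = ∅ <;> simp [h1, h2, Ne.symm (hA z)]
      rw [Finset.sum_congr rfl (fun R _ => hpt R), Finset.sum_ite_eq' univ]
      simp
    rw [Finset.sum_congr rfl (fun z _ => hterm z)]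
    rw [← Finset.sum_filter]
    exact hxfeas y
  · unfold robustTypeII
    dsimp only
    rw [Fintype.sum_prod_type]
    have hterm : ∀ z : Ω, (∑ R : Finset Ω,
        if ¬ (univ.filter (fun w => E z w) ⊆ R) then
          (if R = univ.filter (fun w => E z w) then ρ z * x z
           else if R = ∅ then ρ z * (1 - x z) else 0) else 0)
        = ρ z * (1 - x z) := by
      intro z
      have hpt : ∀ R : Finset Ω,
          (if ¬ (univ.filter (fun w => E z w) ⊆ R) then
            (if R = univ.filter (fun w => E z w) then ρ z * x z
             else if R = ∅ then ρ z * (1 - x z) else 0) else 0)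
          = (if R = ∅ then ρ z * (1 - x z) else 0) := by
        intro R
        by_cases h2 : R = ∅
        · subst h2
          have hns : ¬ (univ.filter (fun w => E z w) ⊆ (∅ : Finset Ω)) := by
            rw [Finset.subset_empty]; exact hA z
          simp [hns, (hA z).symm, Ne.symm (hA z)]
        · by_cases h1 : R = univ.filter (fun w => E z w)
          · subst h1; simp [hA z]
          · simp [h1, h2]
      rw [Finset.sum_congr rfl (fun R _ => hpt R), Finset.sum_ite_eq' univ]
      simp
    rw [Finset.sum_congr rfl (fun z _ => hterm z)]
    have : ∑ z, ρ z * (1 - x z) = (∑ z, ρ z) - ∑ z, ρ z * x z := by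
      rw [← Finset.sum_sub_distrib]; congr 1; ext z; ring
    rw [this, hρ1]
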